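/- For the function x_N(t) = 1 - (s + m/N)/(s + (m/N)·e^{(s+m/N)t}), evaluated at time t = C·log N + t₀ with fixed t₀ ∈ ℝ: if C < 1/s then x_N(C log N + t₀) → 0 as N → ∞, and if C > 1/s then x_N(C log N + t₀) → 1 as N → ∞. -/

import Mathlib

open Real Filter
open scoped Topology

/-- The solution of the single-site deterministic Fisher-Wright ODE with mutation rate `m/N`
and selection rate `s`, started from `x_N(0) = 0`. -/
noncomputable def xN (m s : ℝ) (N : ℕ) (t : ℝ) : ℝ :=
  1 - (s + m / (N : ℝ)) / (s + m / (N : ℝ) * Real.exp ((s + m / (N : ℝ)) * t))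

/-- Dichotomy at time scale `C log N + t₀`: for `C < 1/s` the mutant frequency tends to `0`,
for `C > 1/s` it tends to `1`, as `N → ∞`. -/
theorem xN_emergence_dichotomy (m s C t₀ : ℝ) (hm : 0 < m) (hs : 0 < s) (hC : 0 < C) :
    (C < 1 / s →
      Tendsto (fun N : ℕ => xN m s N (C * Real.log (N : ℝ) + t₀)) atTop (𝓝 0)) ∧
    (1 / s < C →
      Tendsto (fun N : ℕ => xN m s N (C * Real.log (N : ℝ) + t₀)) atTop (𝓝 1)) := by
  -- a N := s + m/N
  set a : ℕ → ℝ := fun N => s + m / (N : ℝ) with ha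
  have hma : Tendsto (fun N : ℕ => m / (N : ℝ)) atTop (𝓝 0) :=
    tendsto_const_div_atTop_nhds_zero_nat m
  have haS : Tendsto a atTop (𝓝 s) := by
    simpa using (tendsto_const_nhds (x := s)).add hma
  -- f N := (m/N) * exp(a N * t)
  set f : ℕ → ℝ := fun N =>
    m / (N : ℝ) * Real.exp (a N * (C * Real.log (N : ℝ) + t₀)) with hf
  have hfe : ∀ᶠ N : ℕ in atTop,
      f N = m * Real.exp (a N * t₀) * Real.exp ((a N * C - 1) * Real.log (N : ℝ)) := by
    filter_upwards [eventually_ge_atTop 1] with N hN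
    have hN0 : (0 : ℝ) < (N : ℝ) := by exact_mod_cast hN
    have h1 : Real.exp ((a N * C - 1) * Real.log (N : ℝ))
        = Real.exp (a N * C * Real.log (N : ℝ)) / (N : ℝ) := by
      rw [sub_mul, one_mul, Real.exp_sub, Real.exp_log hN0]
    have h2 : Real.exp (a N * (C * Real.log (N : ℝ) + t₀))
        = Real.exp (a N * C * Real.log (N : ℝ)) * Real.exp (a N * t₀) := by
      rw [← Real.exp_add]; ring_nf
    simp only [hf]
    rw [h1, h2]
    field_simp
  have haCt : Tendsto (fun N : ℕ => a N * C - 1) atTop (𝓝 (s * C - 1)) :=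
    (haS.mul_const C).sub_const 1
  have hlog : Tendsto (fun N : ℕ => Real.log (N : ℝ)) atTop atTop :=
    Real.tendsto_log_atTop.comp tendsto_natCast_atTop_atTop
  have hcoef : Tendsto (fun N : ℕ => m * Real.exp (a N * t₀)) atTop
      (𝓝 (m * Real.exp (s * t₀))) :=
    tendsto_const_nhds.mul (Real.continuous_exp.continuousAt.tendsto.comp
      (haS.mul_const t₀))
  constructor
  · intro hCs
    have hneg : s * C - 1 < 0 := by
      have : s * C < 1 := by
        have := (lt_div_iff₀ hs).mp hCs
        linarith [this]
      linarith
    have hE : Tendsto (fun N : ℕ => (a N * C - 1) * Real.log (N : ℝ)) atTop atBot :=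
      haCt.neg_mul_atTop hneg hlog
    have hf0 : Tendsto f atTop (𝓝 0) := by
      apply Tendsto.congr' (hfe.mono fun _ h => h.symm)
      have := hcoef.mul (Real.tendsto_exp_atBot.comp hE)
      simpa using this
    have hden : Tendsto (fun N : ℕ => s + f N) atTop (𝓝 s) := by
      simpa using (tendsto_const_nhds (x := s)).add hf0
    have hratio : Tendsto (fun N : ℕ => a N / (s + f N)) atTop (𝓝 (s / s)) :=
      haS.div hden hs.ne'
    have : Tendsto (fun N : ℕ => (1 : ℝ) - a N / (s + f N)) atTop (𝓝 (1 - s / s)) :=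
      tendsto_const_nhds.sub hratio
    have heq : (1 : ℝ) - s / s = 0 := by field_simp; norm_num
    rw [heq] at this
    exact this
  · intro hCs
    have hpos : 0 < s * C - 1 := by
      have : 1 < s * C := by
        have := (div_lt_iff₀ hs).mp hCs
        linarith [this]
      linarith
    have hE : Tendsto (fun N : ℕ => (a N * C - 1) * Real.log (N : ℝ)) atTop atTop :=
      haCt.pos_mul_atTop hpos hlog
    have hfT : Tendsto f atTop atTop := by
      apply Tendsto.congr' (hfe.mono fun _ h => h.symm)
      exact hcoef.pos_mul_atTop (by positivity) (Real.tendsto_exp_atTop.comp hE)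
    have hden : Tendsto (fun N : ℕ => s + f N) atTop atTop :=
      tendsto_atTop_add_const_left atTop s hfT
    have hratio : Tendsto (fun N : ℕ => a N / (s + f N)) atTop (𝓝 0) :=
      haS.div_atTop hden
    have : Tendsto (fun N : ℕ => (1 : ℝ) - a N / (s + f N)) atTop (𝓝 (1 - 0)) :=
      tendsto_const_nhds.sub hratio
    rw [sub_zero] at this
    exact this
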